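/- Let Σ_u be a symmetric positive definite p×p real matrix, Σ_v a symmetric positive definite q×q real matrix, and C an arbitrary real p×q matrix. Then the supremum over all a ∈ ℝ^p and b ∈ ℝ^q of aᵀCb − (1/2)·(aᵀΣ_u a)·(bᵀΣ_v b) equals (1/2)·‖Σ_u^{-1/2} C Σ_v^{-1/2}‖², where Σ^{-1/2} denotes the inverse of the unique symmetric positive definite square root of Σ and ‖·‖ is the operator (spectral) norm. -/

import Mathlib

open Matrix

open scoped ComplexOrder in
/-- The positive semidefinite square root of a positive semidefinite matrix
(restored with its Mathlib (Dec 2024) definition, since removed from Mathlib). -/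
noncomputable def Matrix.PosSemidef.sqrt {n : Type*} [Fintype n] [DecidableEq n] {𝕜 : Type*}
    [RCLike 𝕜] {A : Matrix n n 𝕜} (hA : A.PosSemidef) : Matrix n n 𝕜 :=
  hA.1.eigenvectorUnitary.1 * diagonal ((↑) ∘ (fun x : ℝ => √x) ∘ hA.1.eigenvalues) *
    (star hA.1.eigenvectorUnitary : Matrix n n 𝕜)

open scoped ComplexOrder in
theorem Matrix.PosSemidef.sqrt_mul_self {n : Type*} [Fintype n] [DecidableEq n] {𝕜 : Type*}
    [RCLike 𝕜] {A : Matrix n n 𝕜} (hA : A.PosSemidef) : hA.sqrt * hA.sqrt = A := by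
  conv_rhs => rw [hA.1.spectral_theorem, Unitary.conjStarAlgAut_apply]
  have hU : (star hA.1.eigenvectorUnitary : Matrix n n 𝕜) * hA.1.eigenvectorUnitary.1 = 1 :=
    Unitary.coe_star_mul_self _
  have hD : diagonal ((↑) ∘ (fun x : ℝ => √x) ∘ hA.1.eigenvalues) *
      diagonal ((↑) ∘ (fun x : ℝ => √x) ∘ hA.1.eigenvalues) =
      diagonal (RCLike.ofReal ∘ hA.1.eigenvalues : n → 𝕜) := by
    rw [diagonal_mul_diagonal]
    congr 1
    funext i
    simp only [Function.comp_apply]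
    rw [← RCLike.ofReal_mul, Real.mul_self_sqrt (hA.eigenvalues_nonneg i)]
  rw [Matrix.PosSemidef.sqrt]
  calc _ = (hA.1.eigenvectorUnitary.1 * diagonal ((↑) ∘ (fun x : ℝ => √x) ∘ hA.1.eigenvalues)) *
        ((star hA.1.eigenvectorUnitary : Matrix n n 𝕜) * hA.1.eigenvectorUnitary.1) *
        (diagonal ((↑) ∘ (fun x : ℝ => √x) ∘ hA.1.eigenvalues) *
        (star hA.1.eigenvectorUnitary : Matrix n n 𝕜)) := by simp only [Matrix.mul_assoc]
    _ = _ := by rw [hU, Matrix.mul_one, Matrix.mul_assoc, ← Matrix.mul_assoc (diagonal _), hD,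
      ← Matrix.mul_assoc]

open scoped ComplexOrder in
theorem Matrix.PosSemidef.isHermitian_sqrt {n : Type*} [Fintype n] [DecidableEq n] {𝕜 : Type*}
    [RCLike 𝕜] {A : Matrix n n 𝕜} (hA : A.PosSemidef) : hA.sqrt.IsHermitian := by
  simp only [IsHermitian, Matrix.PosSemidef.sqrt, conjTranspose_mul, diagonal_conjTranspose,
    Matrix.mul_assoc]
  congr 2
  · rw [← Matrix.star_eq_conjTranspose, star_star]
  · congr 1
    funext i
    simp

set_option maxHeartbeats 1000000 in
/-- For symmetric positive definite `Sᵤ` (`p × p`), `Sᵥ` (`q × q`) and an arbitrary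
real `p × q` matrix `C`, the supremum over `a ∈ ℝ^p`, `b ∈ ℝ^q` of
`aᵀ C b - (1/2) (aᵀ Sᵤ a) (bᵀ Sᵥ b)` equals `(1/2) ‖Sᵤ^{-1/2} C Sᵥ^{-1/2}‖²`,
where `S^{-1/2}` is the inverse of the unique symmetric positive definite square
root of `S` and `‖·‖` is the operator (spectral) norm. -/
theorem stmt1 (p q : ℕ) (Su : Matrix (Fin p) (Fin p) ℝ) (Sv : Matrix (Fin q) (Fin q) ℝ)
    (hu : Su.PosDef) (hv : Sv.PosDef) (C : Matrix (Fin p) (Fin q) ℝ) :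
    (⨆ (a : Fin p → ℝ) (b : Fin q → ℝ),
      (a ⬝ᵥ (C *ᵥ b) - (1 / 2) * (a ⬝ᵥ (Su *ᵥ a)) * (b ⬝ᵥ (Sv *ᵥ b))))
      = (1 / 2) * ‖LinearMap.toContinuousLinearMap
          (Matrix.toEuclideanLin ((hu.posSemidef.sqrt)⁻¹ * C * (hv.posSemidef.sqrt)⁻¹))‖ ^ 2 := by
  set R := hu.posSemidef.sqrt with hRdef
  set T := hv.posSemidef.sqrt with hTdef
  set M := R⁻¹ * C * T⁻¹ with hMdef
  set L := LinearMap.toContinuousLinearMap (Matrix.toEuclideanLin M) with hLdef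
  set N := ‖L‖ with hNdef
  have hRR : R * R = Su := hu.posSemidef.sqrt_mul_self
  have hTT : T * T = Sv := hv.posSemidef.sqrt_mul_self
  have hRH : Rᵀ = R := by
    have := hu.posSemidef.isHermitian_sqrt
    simpa [Matrix.IsHermitian, conjTranspose_eq_transpose_of_trivial] using this
  have hTH : Tᵀ = T := by
    have := hv.posSemidef.isHermitian_sqrt
    simpa [Matrix.IsHermitian, conjTranspose_eq_transpose_of_trivial] using this
  have hRdet : IsUnit R.det := by
    have h : R.det * R.det = Su.det := by rw [← det_mul, hRR]
    refine isUnit_iff_ne_zero.2 fun h0 => ?_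
    rw [h0, mul_zero] at h
    exact hu.det_pos.ne' h.symm
  have hTdet : IsUnit T.det := by
    have h : T.det * T.det = Sv.det := by rw [← det_mul, hTT]
    refine isUnit_iff_ne_zero.2 fun h0 => ?_
    rw [h0, mul_zero] at h
    exact hv.det_pos.ne' h.symm
  have hRinv : R * R⁻¹ = 1 := mul_nonsing_inv R hRdet
  have hTinv' : T⁻¹ * T = 1 := nonsing_inv_mul T hTdet
  have hTinv : T * T⁻¹ = 1 := mul_nonsing_inv T hTdet
  -- euclidean embedding
  set e : (Fin p → ℝ) → EuclideanSpace ℝ (Fin p) := ⇑(WithLp.equiv 2 (Fin p → ℝ)).symm with hedef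
  set e' : (Fin q → ℝ) → EuclideanSpace ℝ (Fin q) := ⇑(WithLp.equiv 2 (Fin q → ℝ)).symm with he'def
  have hdot : ∀ x y : Fin p → ℝ, x ⬝ᵥ y = inner ℝ (e x) (e y) := by
    intro x y; simp [hedef, PiLp.inner_apply, dotProduct, mul_comm]
  have hdot' : ∀ x : Fin p → ℝ, x ⬝ᵥ x = ‖e x‖ ^ 2 := by
    intro x; rw [hdot, real_inner_self_eq_norm_sq]
  have hdotq : ∀ x : Fin q → ℝ, x ⬝ᵥ x = ‖e' x‖ ^ 2 := by
    intro x
    rw [show x ⬝ᵥ x = inner ℝ (e' x) (e' x) by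
      rw [he'def, PiLp.inner_apply]; simp [dotProduct, mul_comm, sq], real_inner_self_eq_norm_sq]
  have hLapp : ∀ y : Fin q → ℝ, L (e' y) = e (M *ᵥ y) := by
    intro y
    simp only [hLdef, hedef, he'def, LinearMap.coe_toContinuousLinearMap']
    exact Matrix.toEuclideanLin_apply_piLp_toLp M y
  -- key rewriting of the objective
  have hC : ∀ (a : Fin p → ℝ) (b : Fin q → ℝ),
      a ⬝ᵥ (C *ᵥ b) = (R *ᵥ a) ⬝ᵥ (M *ᵥ (T *ᵥ b)) := by
    intro a b
    have hassoc : R * (R⁻¹ * C * T⁻¹) * T = (R * R⁻¹) * C * (T⁻¹ * T) := by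
      simp only [Matrix.mul_assoc]
    have hCeq : C = R * M * T := by
      rw [hMdef, hassoc, hRinv, hTinv', Matrix.one_mul, Matrix.mul_one]
    conv_lhs => rw [hCeq]
    rw [← mulVec_mulVec, ← mulVec_mulVec, dotProduct_mulVec, ← mulVec_transpose, hRH]
  have hSu : ∀ a : Fin p → ℝ, a ⬝ᵥ (Su *ᵥ a) = (R *ᵥ a) ⬝ᵥ (R *ᵥ a) := by
    intro a
    rw [← hRR, ← mulVec_mulVec, dotProduct_mulVec, ← mulVec_transpose, hRH]
  have hSv : ∀ b : Fin q → ℝ, b ⬝ᵥ (Sv *ᵥ b) = (T *ᵥ b) ⬝ᵥ (T *ᵥ b) := by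
    intro b
    rw [← hTT, ← mulVec_mulVec, dotProduct_mulVec, ← mulVec_transpose, hTH]
  set f : (Fin p → ℝ) → (Fin q → ℝ) → ℝ := fun a b =>
    a ⬝ᵥ (C *ᵥ b) - (1 / 2) * (a ⬝ᵥ (Su *ᵥ a)) * (b ⬝ᵥ (Sv *ᵥ b)) with hfdef
  have hN0 : 0 ≤ N := norm_nonneg L
  -- pointwise upper bound
  have hub : ∀ a b, f a b ≤ (1/2) * N ^ 2 := by
    intro a b
    have h1 : a ⬝ᵥ (C *ᵥ b) ≤ ‖e (R *ᵥ a)‖ * (N * ‖e' (T *ᵥ b)‖) := by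
      rw [hC, hdot]
      have step : ‖e (M *ᵥ (T *ᵥ b))‖ ≤ N * ‖e' (T *ᵥ b)‖ := by
        rw [← hLapp]; exact L.le_opNorm _
      calc inner ℝ (e (R *ᵥ a)) (e (M *ᵥ (T *ᵥ b)))
          ≤ ‖e (R *ᵥ a)‖ * ‖e (M *ᵥ (T *ᵥ b))‖ := real_inner_le_norm _ _
        _ ≤ ‖e (R *ᵥ a)‖ * (N * ‖e' (T *ᵥ b)‖) :=
            mul_le_mul_of_nonneg_left step (norm_nonneg _)
    have h2 := hSu a
    have h3 := hSv b
    have hx := norm_nonneg (e (R *ᵥ a))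
    have hy := norm_nonneg (e' (T *ᵥ b))
    simp only [hfdef]
    rw [h2, h3, hdot' (R *ᵥ a), hdotq (T *ᵥ b)]
    nlinarith [sq_nonneg (N - ‖e (R *ᵥ a)‖ * ‖e' (T *ᵥ b)‖), h1]
  have hbddI : ∀ a, BddAbove (Set.range (f a)) :=
    fun a => ⟨(1/2) * N ^ 2, Set.forall_mem_range.2 (hub a)⟩
  have hbddO : BddAbove (Set.range fun a => ⨆ b, f a b) :=
    ⟨(1/2) * N ^ 2, Set.forall_mem_range.2 fun a => ciSup_le (hub a)⟩
  set S := ⨆ a, ⨆ b, f a b with hSdef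
  have hle : ∀ a b, f a b ≤ S :=
    fun a b => (le_ciSup (hbddI a) b).trans (le_ciSup hbddO a)
  have hS0 : 0 ≤ S := by
    have := hle 0 0
    simpa [hfdef] using this
  -- lower bound : N ≤ sqrt (2 S)
  have hNle : N ≤ Real.sqrt (2 * S) := by
    apply ContinuousLinearMap.opNorm_le_bound _ (Real.sqrt_nonneg _)
    intro v
    rcases eq_or_ne v 0 with rfl | hv
    · simp
    · have hnv : (0:ℝ) < ‖v‖ := norm_pos_iff.2 hv
      set y : Fin q → ℝ := WithLp.equiv 2 (Fin q → ℝ) v with hydef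
      have hey : e' y = v := by rw [he'def, hydef]; exact (WithLp.equiv 2 _).symm_apply_apply v
      set t : ℝ := 1 / ‖v‖ ^ 2 with htdef
      set a : Fin p → ℝ := R⁻¹ *ᵥ (t • (M *ᵥ y)) with hadef
      set b : Fin q → ℝ := T⁻¹ *ᵥ y with hbdef
      have hRa : R *ᵥ a = t • (M *ᵥ y) := by
        rw [hadef, mulVec_mulVec, hRinv, one_mulVec]
      have hTb : T *ᵥ b = y := by
        rw [hbdef, mulVec_mulVec, hTinv, one_mulVec]
      have hLv : ‖L v‖ ^ 2 = (M *ᵥ y) ⬝ᵥ (M *ᵥ y) := by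
        rw [← hey, hLapp, ← hdot']
      have hf : f a b = t * ‖L v‖^2 - (1/2) * (t^2 * ‖L v‖^2) * ‖v‖^2 := by
        simp only [hfdef]
        rw [hC, hSu, hSv, hRa, hTb, smul_dotProduct, dotProduct_smul, smul_dotProduct,
          smul_eq_mul, smul_eq_mul, ← hLv, hdotq y, hey]
        ring
      have hfval : f a b = (1/2) * ‖L v‖^2 / ‖v‖^2 := by
        rw [hf, htdef]
        field_simp
        ring
      have h1 : (1/2) * ‖L v‖^2 / ‖v‖^2 ≤ S := hfval ▸ hle a b
      have h2 : ‖L v‖^2 ≤ 2 * S * ‖v‖^2 := by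
        rw [div_le_iff₀ (by positivity)] at h1
        nlinarith
      calc ‖L v‖ = Real.sqrt (‖L v‖^2) := by rw [Real.sqrt_sq (norm_nonneg _)]
        _ ≤ Real.sqrt (2 * S * ‖v‖^2) := Real.sqrt_le_sqrt h2
        _ = Real.sqrt (2 * S) * ‖v‖ := by
            rw [Real.sqrt_mul (by positivity), Real.sqrt_sq (norm_nonneg _)]
  have hlow : (1/2) * N ^ 2 ≤ S := by
    have hsq : N ^ 2 ≤ 2 * S := by
      have h := pow_le_pow_left₀ hN0 hNle 2
      rwa [Real.sq_sqrt (by linarith)] at h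
    linarith
  have hupp : S ≤ (1/2) * N ^ 2 := ciSup_le fun a => ciSup_le (hub a)
  exact le_antisymm hupp hlow
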